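/- If −1/2 < η̂ < 1/2 + σ̂a₁/(a₂ + 1), then there exists a unique F_h ∈ (0, 1) with J(F_h) = F_h + η̂ − 1/2; moreover G(F) > 0 for all F ∈ [0, F_h) and G(F) < 0 for all F ∈ (F_h, 1]. -/

import Mathlib

/-- `J(F) = σ̂·(1 + ξF)·a₁(1 − F)/(a₂(1 − F) + 1)`. -/
noncomputable def Jfun (σ ξ a₁ a₂ F : ℝ) : ℝ :=
  σ * (1 + ξ * F) * (a₁ * (1 - F)) / (a₂ * (1 - F) + 1)

/-- The right-hand side `G(F) = max{0, min{1, 1/2 − η̂ + J(F)}} − F` of the reduced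
single-lake dynamics. -/
noncomputable def Gfun (σ ξ a₁ a₂ η F : ℝ) : ℝ :=
  max 0 (min 1 (1 / 2 - η + Jfun σ ξ a₁ a₂ F)) - F

/-- Numerator polynomial of `J(F) − (F + η − 1/2)`. -/
noncomputable def Pfun (σ ξ a₁ a₂ η F : ℝ) : ℝ :=
  σ * (1 + ξ * F) * (a₁ * (1 - F)) - (F + η - 1 / 2) * (a₂ * (1 - F) + 1)

/-- For `−1/2 < η̂ < 1/2 + σ̂a₁/(a₂ + 1)` there is a unique interior equilibrium `F_h`,
with `G > 0` below it and `G < 0` above it. -/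
theorem stmt_9 (σ ξ a₁ a₂ η : ℝ)
    (hσ : 0 < σ) (hξ : 0 < ξ) (ha₁ : 0 < a₁) (ha₂ : 0 < a₂)
    (hη₁ : -(1 / 2) < η) (hη₂ : η < 1 / 2 + σ * a₁ / (a₂ + 1)) :
    ∃ Fh ∈ Set.Ioo (0 : ℝ) 1,
      Jfun σ ξ a₁ a₂ Fh = Fh + η - 1 / 2 ∧
      (∀ F ∈ Set.Ioo (0 : ℝ) 1, Jfun σ ξ a₁ a₂ F = F + η - 1 / 2 → F = Fh) ∧
      (∀ F ∈ Set.Ico (0 : ℝ) Fh, 0 < Gfun σ ξ a₁ a₂ η F) ∧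
      (∀ F ∈ Set.Ioc Fh (1 : ℝ), Gfun σ ξ a₁ a₂ η F < 0) := by
  have hcont : Continuous (Pfun σ ξ a₁ a₂ η) := by
    unfold Pfun; continuity
  have hD : ∀ F : ℝ, F ≤ 1 → 0 < a₂ * (1 - F) + 1 := by
    intro F hF; nlinarith
  have hη₂' : (η - 1 / 2) * (a₂ + 1) < σ * a₁ := by
    have h2 : η - 1 / 2 < σ * a₁ / (a₂ + 1) := by linarith
    exact (lt_div_iff₀ (by linarith : (0:ℝ) < a₂ + 1)).mp h2
  have hP0 : 0 < Pfun σ ξ a₁ a₂ η 0 := by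
    unfold Pfun; nlinarith
  have hP1 : Pfun σ ξ a₁ a₂ η 1 < 0 := by
    unfold Pfun; nlinarith
  -- relation between J and P
  have hsign : ∀ F : ℝ, F ≤ 1 →
      Jfun σ ξ a₁ a₂ F - (F + η - 1 / 2)
        = Pfun σ ξ a₁ a₂ η F / (a₂ * (1 - F) + 1) := by
    intro F hF
    have hDF := hD F hF
    have hDF' := hDF.ne'
    unfold Jfun Pfun
    rw [eq_div_iff hDF', sub_mul, div_mul_cancel₀ _ hDF']
  -- uniqueness of roots of P in (0,1)
  have huniq : ∀ x ∈ Set.Ioo (0:ℝ) 1, ∀ y ∈ Set.Ioo (0:ℝ) 1,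
      Pfun σ ξ a₁ a₂ η x = 0 → Pfun σ ξ a₁ a₂ η y = 0 → x = y := by
    have key : ∀ x ∈ Set.Ioo (0:ℝ) 1, ∀ y ∈ Set.Ioo (0:ℝ) 1, x < y →
        Pfun σ ξ a₁ a₂ η x = 0 → Pfun σ ξ a₁ a₂ η y = 0 → False := by
      intro x hx y hy hxy hPx hPy
      set A : ℝ := a₂ - σ * a₁ * ξ with hA
      set B : ℝ := σ * a₁ * (ξ - 1) - (a₂ + 1) + (η - 1 / 2) * a₂ with hB
      set C : ℝ := σ * a₁ - (η - 1 / 2) * (a₂ + 1) with hC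
      have hexp : ∀ F : ℝ, Pfun σ ξ a₁ a₂ η F = A * F ^ 2 + B * F + C := by
        intro F; unfold Pfun; rw [hA, hB, hC]; ring
      have hx' : A * x ^ 2 + B * x + C = 0 := by rw [← hexp]; exact hPx
      have hy' : A * y ^ 2 + B * y + C = 0 := by rw [← hexp]; exact hPy
      have hsub : (x - y) * (A * (x + y) + B) = 0 := by linear_combination hx' - hy'
      have hxy' : x - y ≠ 0 := sub_ne_zero.mpr (ne_of_lt hxy)
      have hAB : A * (x + y) + B = 0 := by
        rcases mul_eq_zero.mp hsub with h | h
        · exact absurd h hxy'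
        · exact h
      have hCeq : C = A * (x * y) := by linear_combination hx' - x * hAB
      have hC0 : 0 < C := by
        have h0 := hP0
        rw [hexp 0] at h0
        nlinarith
      have hApos : 0 < A := by nlinarith [mul_pos hx.1 hy.1]
      have hP1' : A + B + C < 0 := by
        have := hP1; rw [hexp 1] at this; linarith
      have hABC : A + B + C = A * ((1 - x) * (1 - y)) := by
        linear_combination hAB + hCeq
      nlinarith [mul_pos (sub_pos.mpr hx.2) (sub_pos.mpr hy.2)]
    intro x hx y hy hPx hPy
    rcases lt_trichotomy x y with h | h | h
    · exact absurd (key x hx y hy h hPx hPy) (by simp)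
    · exact h
    · exact absurd (key y hy x hx h hPy hPx) (by simp)
  -- existence of a root
  have hIVT : (0:ℝ) ∈ Set.Ioo (Pfun σ ξ a₁ a₂ η 1) (Pfun σ ξ a₁ a₂ η 0) := ⟨hP1, hP0⟩
  obtain ⟨Fh, hFh_mem, hFh_root⟩ :=
    intermediate_value_Ioo' (by norm_num : (0:ℝ) ≤ 1) hcont.continuousOn hIVT
  have hFh0 : 0 < Fh := hFh_mem.1
  have hFh1 : Fh < 1 := hFh_mem.2
  -- sign of P below and above Fh
  have hPpos : ∀ F ∈ Set.Ico (0:ℝ) Fh, 0 < Pfun σ ξ a₁ a₂ η F := by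
    intro F hF
    rcases eq_or_lt_of_le hF.1 with h0 | h0
    · rw [← h0]; exact hP0
    by_contra hle
    push_neg at hle
    rcases eq_or_lt_of_le hle with heq | hlt
    · have := huniq F ⟨h0, lt_trans hF.2 hFh1⟩ Fh hFh_mem heq hFh_root
      exact absurd this (ne_of_lt hF.2)
    · have hmem : (0:ℝ) ∈ Set.Ioo (Pfun σ ξ a₁ a₂ η F) (Pfun σ ξ a₁ a₂ η 0) := ⟨hlt, hP0⟩
      obtain ⟨r, hr_mem, hr_root⟩ :=
        intermediate_value_Ioo' (le_of_lt h0) hcont.continuousOn hmem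
      have hr01 : r ∈ Set.Ioo (0:ℝ) 1 := ⟨hr_mem.1, lt_trans (lt_trans hr_mem.2 hF.2) hFh1⟩
      have heqr := huniq r hr01 Fh hFh_mem hr_root hFh_root
      exact absurd heqr (ne_of_lt (lt_trans hr_mem.2 hF.2))
  have hPneg : ∀ F ∈ Set.Ioc Fh (1:ℝ), Pfun σ ξ a₁ a₂ η F < 0 := by
    intro F hF
    rcases eq_or_lt_of_le hF.2 with h1 | h1
    · rw [h1]; exact hP1
    by_contra hle
    push_neg at hle
    rcases eq_or_lt_of_le hle with heq | hlt
    · have := huniq F ⟨lt_trans hFh0 hF.1, h1⟩ Fh hFh_mem heq.symm hFh_root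
      exact absurd this.symm (ne_of_lt hF.1)
    · have hmem : (0:ℝ) ∈ Set.Ioo (Pfun σ ξ a₁ a₂ η 1) (Pfun σ ξ a₁ a₂ η F) := ⟨hP1, hlt⟩
      obtain ⟨r, hr_mem, hr_root⟩ :=
        intermediate_value_Ioo' (le_of_lt h1) hcont.continuousOn hmem
      have hr01 : r ∈ Set.Ioo (0:ℝ) 1 := ⟨lt_trans (lt_trans hFh0 hF.1) hr_mem.1, hr_mem.2⟩
      have heqFh := huniq r hr01 Fh hFh_mem hr_root hFh_root
      exact absurd heqFh.symm (ne_of_lt (lt_trans hF.1 hr_mem.1))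
  refine ⟨Fh, hFh_mem, ?_, ?_, ?_, ?_⟩
  · have := hsign Fh (le_of_lt hFh1)
    rw [hFh_root] at this
    simp at this
    linarith
  · intro F hF hJF
    apply huniq F hF Fh hFh_mem _ hFh_root
    have h := hsign F (le_of_lt hF.2)
    rw [hJF, sub_self] at h
    have hDne : (a₂ * (1 - F) + 1) ≠ 0 := ne_of_gt (hD F (le_of_lt hF.2))
    field_simp at h
    simpa using h.symm
  · intro F hF
    have hPF := hPpos F hF
    have hF1 : F < 1 := lt_trans hF.2 hFh1
    have hDF := hD F (le_of_lt hF1)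
    have hdiv : 0 < Pfun σ ξ a₁ a₂ η F / (a₂ * (1 - F) + 1) := div_pos hPF hDF
    have hJ : F < 1 / 2 - η + Jfun σ ξ a₁ a₂ F := by
      have := hsign F (le_of_lt hF1)
      linarith
    have h1 : F < min 1 (1 / 2 - η + Jfun σ ξ a₁ a₂ F) := lt_min hF1 hJ
    have h2 : F < max 0 (min 1 (1 / 2 - η + Jfun σ ξ a₁ a₂ F)) :=
      lt_of_lt_of_le h1 (le_max_right _ _)
    unfold Gfun
    linarith
  · intro F hF
    have hPF := hPneg F hF
    have hDF := hD F hF.2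
    have hdiv : Pfun σ ξ a₁ a₂ η F / (a₂ * (1 - F) + 1) < 0 := div_neg_of_neg_of_pos hPF hDF
    have hJ : 1 / 2 - η + Jfun σ ξ a₁ a₂ F < F := by
      have := hsign F hF.2
      linarith
    have hF0 : 0 < F := lt_trans hFh0 hF.1
    have h2 : max 0 (min 1 (1 / 2 - η + Jfun σ ξ a₁ a₂ F)) < F :=
      max_lt hF0 (lt_of_le_of_lt (min_le_right _ _) hJ)
    unfold Gfun
    linarith
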